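/- arXiv:2510.11433 — 3 statements merged into one kernel-verified Lean document; each statement's English description precedes it below -/
import Mathlib

section
/- Let H be a Euclidean space, let D be a nonempty subset of H, let x ∈ D and y ∈ H. Then y belongs to the Fréchet normal cone N_F(x;D) if and only if lim_{α↓0} d_D(x+αy)/α = ‖y‖, where d_D is the distance function to D. -/
open Filter Topology Set Metric
open scoped RealInnerProductSpace

noncomputable section

/-- The Fréchet normal cone to `D` at `x`: empty if `x ∉ D`, and otherwise the set of
`y` with `limsup_{z → x, z ∈ D \ {x}} ⟨z - x, y⟩ / ‖z - x‖ ≤ 0`, expressed in ε-δ form. -/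
def fNormal {E : Type*} [NormedAddCommGroup E] [InnerProductSpace ℝ E]
    (D : Set E) (x : E) : Set E :=
  {y | x ∈ D ∧ ∀ ε : ℝ, 0 < ε → ∃ δ : ℝ, 0 < δ ∧
    ∀ z ∈ D, ‖z - x‖ < δ → ⟪z - x, y⟫ ≤ ε * ‖z - x‖}

lemma dist_add_smul_eq {E : Type*} [NormedAddCommGroup E] [InnerProductSpace ℝ E]
    (x z y : E) (α : ℝ) :
    (dist (x + α • y) z) ^ 2
      = α ^ 2 * ‖y‖ ^ 2 - 2 * α * ⟪z - x, y⟫ + ‖z - x‖ ^ 2 := by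
  have h1 : x + α • y - z = α • y - (z - x) := by abel
  rw [dist_eq_norm, h1, norm_sub_sq_real, real_inner_smul_left, norm_smul]
  rw [real_inner_comm]
  simp [mul_pow]
  ring

lemma infDist_upper {E : Type*} [NormedAddCommGroup E] [InnerProductSpace ℝ E]
    (D : Set E) (x : E) (hx : x ∈ D) (y : E) {α : ℝ} (hα : 0 ≤ α) :
    Metric.infDist (x + α • y) D ≤ α * ‖y‖ := by
  have := Metric.infDist_le_dist_of_mem (x := x + α • y) hx
  calc Metric.infDist (x + α • y) D ≤ dist (x + α • y) x := this
    _ = α * ‖y‖ := by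
        rw [dist_eq_norm]
        simp [norm_smul, abs_of_nonneg hα]

/-- For a nonempty `D ⊆ H` (`H` Euclidean), `x ∈ D` and `y ∈ H`:
`y ∈ N_F(x; D)` iff `lim_{α ↓ 0} d_D(x + α y) / α = ‖y‖`. -/
theorem frechet_normal_iff_dist_limit
    {E : Type*} [NormedAddCommGroup E] [InnerProductSpace ℝ E] [FiniteDimensional ℝ E]
    (D : Set E) (hD : D.Nonempty) (x : E) (hx : x ∈ D) (y : E) :
    y ∈ fNormal D x ↔
      Tendsto (fun α : ℝ => Metric.infDist (x + α • y) D / α) (𝓝[>] 0) (𝓝 ‖y‖) := by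
  constructor
  · rintro ⟨-, hN⟩
    by_cases hy0 : y = 0
    · subst hy0
      simp only [smul_zero, add_zero, Metric.infDist_zero_of_mem hx, zero_div, norm_zero]
      exact tendsto_const_nhds
    have hny : 0 < ‖y‖ := norm_pos_iff.2 hy0
    rw [Metric.tendsto_nhds]
    intro ε hε
    set ε₁ : ℝ := min (ε / 2) (‖y‖ / 2) with hε₁def
    have hε₁ : 0 < ε₁ := lt_min (by linarith) (by linarith)
    have hε₁y : ε₁ ≤ ‖y‖ := le_trans (min_le_right _ _) (by linarith)
    have hε₁ε : ε₁ < ε := lt_of_le_of_lt (min_le_left _ _) (by linarith)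
    obtain ⟨δ, hδ, hδb⟩ := hN ε₁ hε₁
    have hδ₁ : 0 < δ / (2 * ‖y‖) := by positivity
    filter_upwards [Ioo_mem_nhdsGT_of_mem (Set.mem_Ico.2 ⟨le_refl 0, hδ₁⟩)] with α hα
    obtain ⟨hα0, hαδ⟩ := hα
    -- lower bound on infDist
    have hlow : α * (‖y‖ - ε₁) ≤ Metric.infDist (x + α • y) D := by
      refine le_of_not_gt fun hlt => ?_
      obtain ⟨z, hz, hdlt⟩ := (Metric.infDist_lt_iff hD).1 hlt
      refine absurd hdlt (not_lt.2 ?_)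
      by_cases hc : ‖z - x‖ < δ
      · have hib := hδb z hz hc
        have hsq := dist_add_smul_eq x z y α
        have h2 : (α * (‖y‖ - ε₁)) ^ 2 ≤ (dist (x + α • y) z) ^ 2 := by
          rw [hsq]
          nlinarith [sq_nonneg (‖z - x‖ - α * ε₁), norm_nonneg (z - x),
            mul_le_mul_of_nonneg_left hib (by positivity : (0:ℝ) ≤ 2 * α),
            mul_nonneg (mul_nonneg hα0.le hα0.le)
              (mul_nonneg hε₁.le (sub_nonneg.2 hε₁y))]
        have hd0 : (0:ℝ) ≤ dist (x + α • y) z := dist_nonneg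
        nlinarith [h2, hd0, mul_nonneg hα0.le (sub_nonneg.2 hε₁y)]
      · push_neg at hc
        have ht : dist x z ≤ dist x (x + α • y) + dist (x + α • y) z := dist_triangle _ _ _
        have h1 : dist x z = ‖z - x‖ := by rw [dist_eq_norm, ← norm_neg]; congr 1; abel
        have h2 : dist x (x + α • y) = α * ‖y‖ := by
          rw [dist_eq_norm]
          simp [norm_smul, abs_of_nonneg hα0.le]
        have h3 : α * ‖y‖ < δ / 2 := by
          rw [lt_div_iff₀ (by positivity)] at hαδ
          nlinarith
        nlinarith [mul_nonneg hα0.le hε₁.le]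
    have hup : Metric.infDist (x + α • y) D ≤ α * ‖y‖ := infDist_upper D x hx y hα0.le
    have hfl : ‖y‖ - ε₁ ≤ Metric.infDist (x + α • y) D / α := by
      rw [le_div_iff₀ hα0]
      linarith [hlow]
    have hfu : Metric.infDist (x + α • y) D / α ≤ ‖y‖ := by
      rw [div_le_iff₀ hα0]
      linarith [hup]
    rw [Real.dist_eq, abs_lt]
    constructor <;> linarith
  · intro h
    refine ⟨hx, ?_⟩
    intro ε hε
    by_cases hεy : ‖y‖ ≤ ε
    · refine ⟨1, one_pos, fun z hz hzδ => ?_⟩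
      calc ⟪z - x, y⟫ ≤ ‖z - x‖ * ‖y‖ := real_inner_le_norm _ _
        _ ≤ ε * ‖z - x‖ := by nlinarith [norm_nonneg (z - x)]
    push_neg at hεy
    have hny : 0 < ‖y‖ := lt_trans hε hεy
    by_contra hcon
    push_neg at hcon
    set η : ℝ := ε ^ 2 / (2 * ‖y‖) with hηdef
    have hη : 0 < η := by positivity
    have hηy : η < ‖y‖ := by
      rw [hηdef, div_lt_iff₀ (by linarith)]
      nlinarith
    have hev : ∀ᶠ α in 𝓝[>] (0:ℝ),
        ‖y‖ - η < Metric.infDist (x + α • y) D / α :=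
      h.eventually (eventually_gt_nhds (by linarith))
    rw [eventually_nhdsWithin_iff, Metric.eventually_nhds_iff] at hev
    obtain ⟨δ₀, hδ₀, hδ₀b⟩ := hev
    obtain ⟨z, hz, hzδ, hzb⟩ := hcon (min (ε * δ₀ / 2) 1) (by positivity)
    set t : ℝ := ‖z - x‖ with htdef
    have ht0 : 0 < t := by
      by_contra h0
      push_neg at h0
      have hteq : t = 0 := le_antisymm h0 (norm_nonneg _)
      have hz0 : z - x = 0 := norm_eq_zero.1 hteq
      rw [hz0, inner_zero_left, hteq, mul_zero] at hzb
      exact lt_irrefl 0 hzb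
    set α : ℝ := t / ε with hαdef
    have hα0 : 0 < α := by positivity
    have hαδ₀ : dist α 0 < δ₀ := by
      rw [Real.dist_eq, sub_zero, abs_of_pos hα0, hαdef, div_lt_iff₀ hε]
      have : t < ε * δ₀ / 2 := lt_of_lt_of_le hzδ (min_le_left _ _)
      nlinarith
    have hkey := hδ₀b hαδ₀ hα0
    -- now show infDist / α < ‖y‖ - η, contradiction
    have hαε : α * ε = t := by
      rw [hαdef]; field_simp
    have hdist2 : (dist (x + α • y) z) ^ 2 < (α * (‖y‖ - η)) ^ 2 := by
      rw [dist_add_smul_eq]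
      have hib : ε * t < ⟪z - x, y⟫ := hzb
      have hexp : (α * (‖y‖ - η)) ^ 2 = α ^ 2 * ‖y‖ ^ 2 - 2 * α ^ 2 * ‖y‖ * η + α ^ 2 * η ^ 2 := by
        ring
      have hηε : 2 * ‖y‖ * η = ε ^ 2 := by
        rw [hηdef]; field_simp
      nlinarith [sq_nonneg (α * η), sq_nonneg (t - α * ε)]
    have hdlt : dist (x + α • y) z < α * (‖y‖ - η) := by
      have h1 : (0:ℝ) ≤ dist (x + α • y) z := dist_nonneg
      nlinarith [mul_pos hα0 (by linarith : (0:ℝ) < ‖y‖ - η)]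
    have hle : Metric.infDist (x + α • y) D ≤ dist (x + α • y) z :=
      Metric.infDist_le_dist_of_mem hz
    have : Metric.infDist (x + α • y) D / α < ‖y‖ - η := by
      rw [div_lt_iff₀ hα0]
      calc Metric.infDist (x + α • y) D ≤ dist (x + α • y) z := hle
        _ < α * (‖y‖ - η) := hdlt
        _ = (‖y‖ - η) * α := by ring
    linarith [hkey]
end
end

section
/- Suppose (𝒳, S, γ, (Λ_a)_{a∈A}) is a spectral decomposition system for a Euclidean space 𝔥 with {Λ_a : a ∈ A} closed in L(𝒳,𝔥). Let D be a nonempty S-invariant subset of 𝒳 and let X ∈ 𝔥. Then cone(X − Proj_{γ⁻¹(D)}(X)) = {Λ_a y : y ∈ cone(γ(X) − Proj_D(γ(X))), a ∈ A_X}, where for a set C, cone C = ⋃_{α>0} αC. In fact the stronger identity X − Proj_{γ⁻¹(D)}(X) = {Λ_a y : y ∈ γ(X) − Proj_D(γ(X)), a ∈ A_X} holds. -/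
open Filter Topology Set Metric
open scoped RealInnerProductSpace

noncomputable section

/-- A spectral decomposition system `(𝒳, S, γ, (Λ_a)_{a ∈ A})` for the space `H`:
`S` acts on `𝒳` by linear isometries (via `act`), `γ : H → 𝒳` is the spectral
mapping, each `Λ a : 𝒳 → H` is a linear isometry, and the axioms [A], [B], [C] hold,
with `τ` the `S`-invariant ordering mapping of axiom [A]. -/
structure SDS (𝒳 H : Type*) [NormedAddCommGroup 𝒳] [InnerProductSpace ℝ 𝒳]
    [NormedAddCommGroup H] [InnerProductSpace ℝ H]
    (S : Type*) [Group S] (A : Type*) where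
  act : S →* (𝒳 ≃ₗᵢ[ℝ] 𝒳)
  γ : H → 𝒳
  Λ : A → 𝒳 →ₗᵢ[ℝ] H
  τ : 𝒳 → 𝒳
  τ_inv : ∀ (s : S) (x : 𝒳), τ (act s x) = τ x
  τ_orbit : ∀ x : 𝒳, ∃ s : S, τ x = act s x
  γΛ : ∀ (a : A) (x : 𝒳), γ (Λ a x) = τ x
  decomp : ∀ X : H, ∃ a : A, X = Λ a (γ X)
  inner_le : ∀ X Y : H, ⟪X, Y⟫ ≤ ⟪γ X, γ Y⟫

variable {𝒳 H S A : Type*} [NormedAddCommGroup 𝒳] [InnerProductSpace ℝ 𝒳]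
    [NormedAddCommGroup H] [InnerProductSpace ℝ H] [Group S]

/-- The set `{Λ_a : a ∈ A}`, regarded as a subset of the space `L(𝒳, H)` of
continuous linear maps with the operator norm. -/
def SDS.LambdaSet (𝔖 : SDS 𝒳 H S A) : Set (𝒳 →L[ℝ] H) :=
  {L | ∃ a : A, L = (𝔖.Λ a).toContinuousLinearMap}

/-- `A_X = {a ∈ A : X = Λ_a (γ X)}`. -/
def SDS.AX (𝔖 : SDS 𝒳 H S A) (X : H) : Set A := {a | X = 𝔖.Λ a (𝔖.γ X)}

/-- The (possibly multivalued) projector onto `D`: `Proj_D(x) = {y ∈ D : ‖x - y‖ = d_D(x)}`. -/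
def projSet {E : Type*} [NormedAddCommGroup E] [InnerProductSpace ℝ E]
    (D : Set E) (x : E) : Set E :=
  {y ∈ D | ‖x - y‖ = Metric.infDist x D}

/-- `cone C = ⋃_{α > 0} α • C`. -/
def coneOf {E : Type*} [NormedAddCommGroup E] [InnerProductSpace ℝ E]
    (C : Set E) : Set E :=
  {z | ∃ α : ℝ, 0 < α ∧ ∃ c ∈ C, z = α • c}

lemma le_infDist_of_forall {α : Type*} [PseudoMetricSpace α] {s : Set α}
    (hs : s.Nonempty) {x : α} {b : ℝ} (h : ∀ y ∈ s, b ≤ dist x y) :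
    b ≤ Metric.infDist x s := by
  by_contra hlt
  push_neg at hlt
  obtain ⟨y, hy, hd⟩ := (Metric.infDist_lt_iff hs).mp hlt
  exact absurd (h y hy) (not_le.mpr hd)

lemma SDS_norm_gamma (𝔖 : SDS 𝒳 H S A) (X : H) : ‖𝔖.γ X‖ = ‖X‖ := by
  obtain ⟨a, ha⟩ := 𝔖.decomp X
  conv_rhs => rw [ha]
  rw [(𝔖.Λ a).norm_map]

lemma SDS_mem_pre (𝔖 : SDS 𝒳 H S A) {D : Set 𝒳}
    (hDinv : ∀ (s : S), ∀ x ∈ D, 𝔖.act s x ∈ D) (a : A) {z : 𝒳} (hz : z ∈ D) :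
    𝔖.γ (𝔖.Λ a z) ∈ D := by
  rw [𝔖.γΛ]
  obtain ⟨s, hs⟩ := 𝔖.τ_orbit z
  rw [hs]; exact hDinv s z hz

lemma SDS_nonexp (𝔖 : SDS 𝒳 H S A) (X Z : H) : ‖𝔖.γ X - 𝔖.γ Z‖ ≤ ‖X - Z‖ := by
  have h2 : ‖𝔖.γ X - 𝔖.γ Z‖ ^ 2 ≤ ‖X - Z‖ ^ 2 := by
    rw [norm_sub_sq_real, norm_sub_sq_real, SDS_norm_gamma, SDS_norm_gamma]
    linarith [𝔖.inner_le X Z]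
  nlinarith [norm_nonneg (𝔖.γ X - 𝔖.γ Z), norm_nonneg (X - Z)]

lemma SDS_pre_nonempty (𝔖 : SDS 𝒳 H S A) {D : Set 𝒳} (hD : D.Nonempty)
    (hDinv : ∀ (s : S), ∀ x ∈ D, 𝔖.act s x ∈ D) (X : H) :
    (𝔖.γ ⁻¹' D).Nonempty := by
  obtain ⟨z, hz⟩ := hD
  obtain ⟨a, _⟩ := 𝔖.decomp X
  exact ⟨𝔖.Λ a z, SDS_mem_pre 𝔖 hDinv a hz⟩

lemma SDS_infDist_eq (𝔖 : SDS 𝒳 H S A) {D : Set 𝒳} (hD : D.Nonempty)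
    (hDinv : ∀ (s : S), ∀ x ∈ D, 𝔖.act s x ∈ D) (X : H) :
    Metric.infDist X (𝔖.γ ⁻¹' D) = Metric.infDist (𝔖.γ X) D := by
  obtain ⟨a, ha⟩ := 𝔖.decomp X
  apply le_antisymm
  · refine le_infDist_of_forall hD fun z hz => ?_
    have h1 : Metric.infDist X (𝔖.γ ⁻¹' D) ≤ dist X (𝔖.Λ a z) :=
      Metric.infDist_le_dist_of_mem (SDS_mem_pre 𝔖 hDinv a hz)
    calc Metric.infDist X (𝔖.γ ⁻¹' D) ≤ dist X (𝔖.Λ a z) := h1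
      _ = dist (𝔖.γ X) z := by
          rw [dist_eq_norm, dist_eq_norm]
          conv_lhs => rw [ha]
          rw [← map_sub, (𝔖.Λ a).norm_map]
  · refine le_infDist_of_forall (SDS_pre_nonempty 𝔖 hD hDinv X) fun Z hZ => ?_
    calc Metric.infDist (𝔖.γ X) D ≤ dist (𝔖.γ X) (𝔖.γ Z) :=
          Metric.infDist_le_dist_of_mem hZ
      _ ≤ dist X Z := by rw [dist_eq_norm, dist_eq_norm]; exact SDS_nonexp 𝔖 X Z

lemma SDS_proj_key (𝔖 : SDS 𝒳 H S A) {D : Set 𝒳} (hD : D.Nonempty)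
    (hDinv : ∀ (s : S), ∀ x ∈ D, 𝔖.act s x ∈ D) (X : H) {Z : H}
    (hZ : Z ∈ projSet (𝔖.γ ⁻¹' D) X) :
    ∃ a : A, X = 𝔖.Λ a (𝔖.γ X) ∧ Z = 𝔖.Λ a (𝔖.γ Z) ∧
      𝔖.γ Z ∈ projSet D (𝔖.γ X) := by
  obtain ⟨hZD, hZd⟩ := hZ
  have hdd : Metric.infDist X (𝔖.γ ⁻¹' D) = Metric.infDist (𝔖.γ X) D :=
    SDS_infDist_eq 𝔖 hD hDinv X
  -- equality ‖γX − γZ‖ = ‖X − Z‖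
  have hle : Metric.infDist (𝔖.γ X) D ≤ ‖𝔖.γ X - 𝔖.γ Z‖ := by
    have := Metric.infDist_le_dist_of_mem (x := 𝔖.γ X) hZD
    rwa [dist_eq_norm] at this
  have hne : ‖𝔖.γ X - 𝔖.γ Z‖ = ‖X - Z‖ :=
    le_antisymm (SDS_nonexp 𝔖 X Z) (by rw [hZd, hdd]; exact hle)
  have hγproj : 𝔖.γ Z ∈ projSet D (𝔖.γ X) :=
    ⟨hZD, by rw [hne, hZd, hdd]⟩
  have heq : ⟪X, Z⟫ = ⟪𝔖.γ X, 𝔖.γ Z⟫ := by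
    have h1 := norm_sub_sq_real (𝔖.γ X) (𝔖.γ Z)
    rw [hne, norm_sub_sq_real, SDS_norm_gamma, SDS_norm_gamma] at h1
    linarith
  have hlin : 𝔖.γ (X + Z) = 𝔖.γ X + 𝔖.γ Z := by
    have h0 : ‖𝔖.γ (X + Z) - (𝔖.γ X + 𝔖.γ Z)‖ ^ 2 ≤ 0 := by
      rw [norm_sub_sq_real, norm_add_sq_real, SDS_norm_gamma, SDS_norm_gamma,
        SDS_norm_gamma, inner_add_right, norm_add_sq_real]
      have h2 := 𝔖.inner_le (X + Z) X
      have h3 := 𝔖.inner_le (X + Z) Z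
      rw [inner_add_left] at h2 h3
      linarith [heq, real_inner_comm Z X, real_inner_self_eq_norm_sq X,
        real_inner_self_eq_norm_sq Z]
    have h0' : ‖𝔖.γ (X + Z) - (𝔖.γ X + 𝔖.γ Z)‖ = 0 := by
      nlinarith [norm_nonneg (𝔖.γ (X + Z) - (𝔖.γ X + 𝔖.γ Z))]
    rw [norm_eq_zero, sub_eq_zero] at h0'
    exact h0'
  obtain ⟨a, ha⟩ := 𝔖.decomp (X + Z)
  set P := 𝔖.Λ a (𝔖.γ X) with hP
  set Q := 𝔖.Λ a (𝔖.γ Z) with hQ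
  have hPQ : X + Z = P + Q := by rw [ha, hlin, map_add]
  have hPn : ⟪P, P⟫ = ⟪X, X⟫ := by
    rw [real_inner_self_eq_norm_sq, real_inner_self_eq_norm_sq, hP,
      (𝔖.Λ a).norm_map, SDS_norm_gamma]
  have hQn : ⟪Q, Q⟫ = ⟪Z, Z⟫ := by
    rw [real_inner_self_eq_norm_sq, real_inner_self_eq_norm_sq, hQ,
      (𝔖.Λ a).norm_map, SDS_norm_gamma]
  have hQD : Q ∈ 𝔖.γ ⁻¹' D := SDS_mem_pre 𝔖 hDinv a hZD
  have hge : ‖X - Z‖ ≤ ‖X - Q‖ := by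
    rw [hZd]
    have := Metric.infDist_le_dist_of_mem (x := X) hQD
    rwa [dist_eq_norm] at this
  have hQE : Q = X + Z - P := by rw [hPQ]; abel
  have hPX : P = X := by
    have hge2 : ⟪X - Z, X - Z⟫ ≤ ⟪X - Q, X - Q⟫ := by
      rw [real_inner_self_eq_norm_sq, real_inner_self_eq_norm_sq]
      have := pow_le_pow_left₀ (norm_nonneg _) hge 2
      exact this
    rw [hQE] at hge2 hQn
    have hfin : ⟪X - P, X - P⟫ ≤ 0 := by
      simp only [inner_sub_left, inner_sub_right, inner_add_left, inner_add_right] at hge2 hQn ⊢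
      linarith [real_inner_comm X P, real_inner_comm X Z, real_inner_comm Z P]
    have := real_inner_self_nonpos.mp hfin
    rw [sub_eq_zero] at this
    exact this.symm
  have hQZ : Z = Q := by
    rw [hPX] at hPQ
    exact add_left_cancel hPQ
  exact ⟨a, hPX.symm, hQZ.trans hQ, hγproj⟩

/-- For a nonempty `S`-invariant `D ⊆ 𝒳` and `X ∈ H`:
`cone (X - Proj_{γ⁻¹(D)}(X)) = {Λ_a y : y ∈ cone (γ(X) - Proj_D(γ(X))), a ∈ A_X}`,
and in fact `X - Proj_{γ⁻¹(D)}(X) = {Λ_a y : y ∈ γ(X) - Proj_D(γ(X)), a ∈ A_X}`. -/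
theorem cone_proj_eq
    [FiniteDimensional ℝ 𝒳] [FiniteDimensional ℝ H]
    (𝔖 : SDS 𝒳 H S A) (hcl : IsClosed 𝔖.LambdaSet)
    (D : Set 𝒳) (hD : D.Nonempty) (hDinv : ∀ (s : S), ∀ x ∈ D, 𝔖.act s x ∈ D)
    (X : H) :
    coneOf ((fun Z => X - Z) '' projSet (𝔖.γ ⁻¹' D) X)
      = {Y | ∃ y ∈ coneOf ((fun z => 𝔖.γ X - z) '' projSet D (𝔖.γ X)),
          ∃ a ∈ 𝔖.AX X, Y = 𝔖.Λ a y} ∧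
    (fun Z => X - Z) '' projSet (𝔖.γ ⁻¹' D) X
      = {Y | ∃ y ∈ (fun z => 𝔖.γ X - z) '' projSet D (𝔖.γ X),
          ∃ a ∈ 𝔖.AX X, Y = 𝔖.Λ a y} := by
  have hmain : (fun Z => X - Z) '' projSet (𝔖.γ ⁻¹' D) X
      = {Y | ∃ y ∈ (fun z => 𝔖.γ X - z) '' projSet D (𝔖.γ X),
          ∃ a ∈ 𝔖.AX X, Y = 𝔖.Λ a y} := by
    ext Y
    constructor
    · rintro ⟨Z, hZ, rfl⟩
      obtain ⟨a, haX, haZ, hγ⟩ := SDS_proj_key 𝔖 hD hDinv X hZ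
      refine ⟨𝔖.γ X - 𝔖.γ Z, ⟨𝔖.γ Z, hγ, rfl⟩, a, haX, ?_⟩
      rw [map_sub, ← haX, ← haZ]
    · rintro ⟨y, ⟨z, hz, rfl⟩, a, haX, rfl⟩
      have haX' : X = 𝔖.Λ a (𝔖.γ X) := haX
      refine ⟨𝔖.Λ a z, ⟨SDS_mem_pre 𝔖 hDinv a hz.1, ?_⟩, ?_⟩
      · rw [SDS_infDist_eq 𝔖 hD hDinv X, ← hz.2]
        conv_lhs => rw [haX']
        rw [← map_sub, (𝔖.Λ a).norm_map]
      · show X - 𝔖.Λ a z = 𝔖.Λ a (𝔖.γ X - z)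
        rw [map_sub, ← haX']
  refine ⟨?_, hmain⟩
  ext Y
  constructor
  · rintro ⟨α, hα, c, hc, rfl⟩
    rw [hmain] at hc
    obtain ⟨y, hy, a, ha, rfl⟩ := hc
    exact ⟨α • y, ⟨α, hα, y, hy, rfl⟩, a, ha, (map_smul (𝔖.Λ a) α y).symm⟩
  · rintro ⟨y, ⟨α, hα, c, hc, rfl⟩, a, ha, rfl⟩
    refine ⟨α, hα, 𝔖.Λ a c, ?_, ?_⟩
    · rw [hmain]
      exact ⟨c, hc, a, ha, rfl⟩
    · rw [map_smul]
end
end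

section
/- Suppose (𝒳, S, γ, (Λ_a)_{a∈A}) is a spectral decomposition system for a Euclidean space 𝔥 with {Λ_a : a ∈ A} closed in L(𝒳,𝔥). Let φ : 𝒳 → (−∞,+∞] be proper and S-invariant, let Ψ : 𝔥 → ℝ be Fréchet differentiable, and let X ∈ 𝔥 be such that γ(X) ∈ dom φ. If X is a local minimizer of φ∘γ + Ψ, then there exist y ∈ ∂_F φ(γ(X)) and a ∈ A_X such that −∇Ψ(X) = Λ_a y. -/
open Filter Topology Set Metric
open scoped RealInnerProductSpace

noncomputable section

variable {𝒳 H S A : Type*} [NormedAddCommGroup 𝒳] [InnerProductSpace ℝ 𝒳]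
    [NormedAddCommGroup H] [InnerProductSpace ℝ H] [Group S]

/-- The Fréchet subdifferential of an extended-real-valued `f` at `x`: empty unless
`f x` is finite, in which case it is the set of `y` with
`liminf_{z → x, z ≠ x} (f(z) - f(x) - ⟨z - x, y⟩)/‖z - x‖ ≥ 0`, in ε-δ form. -/
def fSubdiff {E : Type*} [NormedAddCommGroup E] [InnerProductSpace ℝ E]
    (f : E → EReal) (x : E) : Set E :=
  {y | (∃ r : ℝ, f x = (r : EReal)) ∧ ∀ ε : ℝ, 0 < ε → ∃ δ : ℝ, 0 < δ ∧
    ∀ z : E, ‖z - x‖ < δ → f x + ((⟪z - x, y⟫ - ε * ‖z - x‖ : ℝ) : EReal) ≤ f z}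

set_option maxHeartbeats 2000000 in
/-- Commutation principle: if `φ : 𝒳 → (-∞, +∞]` is proper and `S`-invariant,
`Ψ : H → ℝ` is Fréchet differentiable with gradient `Ψ'`, `γ(X) ∈ dom φ`, and `X` is a
local minimizer of `φ ∘ γ + Ψ`, then `-∇Ψ(X) = Λ_a y` for some `y ∈ ∂_F φ(γ(X))` and
some `a ∈ A_X`. -/
theorem commutation_principle
    [FiniteDimensional ℝ 𝒳] [FiniteDimensional ℝ H]
    (𝔖 : SDS 𝒳 H S A) (hcl : IsClosed 𝔖.LambdaSet)
    (φ : 𝒳 → EReal) (hφbot : ∀ x : 𝒳, φ x ≠ ⊥) (hφproper : ∃ x : 𝒳, φ x ≠ ⊤)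
    (hφ : ∀ (s : S) (x : 𝒳), φ (𝔖.act s x) = φ x)
    (Ψ : H → ℝ) (Ψ' : H → H) (hΨ : ∀ Z : H, HasGradientAt Ψ (Ψ' Z) Z)
    (X : H) (hdom : φ (𝔖.γ X) ≠ ⊤)
    (hmin : ∃ δ : ℝ, 0 < δ ∧ ∀ Z : H, ‖Z - X‖ < δ →
      φ (𝔖.γ X) + (Ψ X : EReal) ≤ φ (𝔖.γ Z) + (Ψ Z : EReal)) :
    ∃ y ∈ fSubdiff φ (𝔖.γ X), ∃ a ∈ 𝔖.AX X, -Ψ' X = 𝔖.Λ a y := by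
  classical
  set g := Ψ' X with hgdef
  -- basic consequences of the axioms
  have hnormγ : ∀ W : H, ‖𝔖.γ W‖ = ‖W‖ := by
    intro W
    obtain ⟨a, ha⟩ := 𝔖.decomp W
    calc ‖𝔖.γ W‖ = ‖𝔖.Λ a (𝔖.γ W)‖ := ((𝔖.Λ a).norm_map _).symm
    _ = ‖W‖ := by rw [← ha]
  have hτγ : ∀ W : H, 𝔖.τ (𝔖.γ W) = 𝔖.γ W := by
    intro W
    obtain ⟨a, ha⟩ := 𝔖.decomp W
    conv_rhs => rw [ha, 𝔖.γΛ]
  have hγΛγ : ∀ (b : A) (W : H), 𝔖.γ (𝔖.Λ b (𝔖.γ W)) = 𝔖.γ W := fun b W => by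
    rw [𝔖.γΛ, hτγ]
  have hφτ : ∀ x : 𝒳, φ (𝔖.τ x) = φ x := by
    intro x
    obtain ⟨s, hs⟩ := 𝔖.τ_orbit x
    rw [hs, hφ]
  have hφγΛ : ∀ (b : A) (z : 𝒳), φ (𝔖.γ (𝔖.Λ b z)) = φ z := fun b z => by
    rw [𝔖.γΛ, hφτ]
  have hinner : ∀ (b : A) (u v : 𝒳), ⟪𝔖.Λ b u, 𝔖.Λ b v⟫ = ⟪u, v⟫ := fun b u v =>
    (𝔖.Λ b).inner_map_map u v
  obtain ⟨r, hr⟩ : ∃ r : ℝ, φ (𝔖.γ X) = (r : EReal) :=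
    ⟨(φ (𝔖.γ X)).toReal, (EReal.coe_toReal hdom (hφbot _)).symm⟩
  obtain ⟨δ₁, hδ₁, hmin⟩ := hmin
  -- minimality on the fiber
  have hΨle : ∀ Z : H, 𝔖.γ Z = 𝔖.γ X → ‖Z - X‖ < δ₁ → Ψ X ≤ Ψ Z := by
    intro Z hZ hd
    have h1 := hmin Z hd
    rw [hZ, hr, ← EReal.coe_add, ← EReal.coe_add] at h1
    have := EReal.coe_le_coe_iff.mp h1
    linarith
  -- ε-δ form of the gradient at X
  have hgradε : ∀ ε : ℝ, 0 < ε → ∃ δ : ℝ, 0 < δ ∧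
      ∀ Z : H, ‖Z - X‖ < δ → |Ψ Z - Ψ X - ⟪g, Z - X⟫| ≤ ε * ‖Z - X‖ := by
    have hgrad := hΨ X
    rw [hasGradientAt_iff_hasFDerivAt] at hgrad
    have hlo := hgrad.isLittleO
    intro ε hε
    have h2 := hlo.def hε
    rw [Metric.eventually_nhds_iff] at h2
    obtain ⟨δ, hδ, h3⟩ := h2
    refine ⟨δ, hδ, fun Z hZ => ?_⟩
    have := h3 (show dist Z X < δ by rwa [dist_eq_norm])
    simpa [Real.norm_eq_abs, InnerProductSpace.toDual_apply_apply] using this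
  -- the family of decompositions of X - t g
  have hc0 : ∀ t : ℝ, ∃ a : A, X - t • g = 𝔖.Λ a (𝔖.γ (X - t • g)) := fun t => 𝔖.decomp _
  choose c hc using hc0
  set Zt : ℝ → H := fun t => 𝔖.Λ (c t) (𝔖.γ X) with hZtdef
  set yt : ℝ → 𝒳 := fun t => t⁻¹ • (𝔖.γ (X - t • g) - 𝔖.γ X) with hytdef
  have hZtγ : ∀ t, 𝔖.γ (Zt t) = 𝔖.γ X := fun t => hγΛγ _ _
  have hZtnorm : ∀ t, ‖Zt t‖ = ‖X‖ := fun t => by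
    show ‖𝔖.Λ (c t) (𝔖.γ X)‖ = ‖X‖
    rw [(𝔖.Λ (c t)).norm_map, hnormγ]
  have hZtX : ∀ t, ⟪Zt t, X⟫ ≤ ‖X‖ ^ 2 := by
    intro t
    have h1 := 𝔖.inner_le (Zt t) X
    rw [hZtγ] at h1
    calc ⟪Zt t, X⟫ ≤ ⟪𝔖.γ X, 𝔖.γ X⟫ := h1
    _ = ‖𝔖.γ X‖ ^ 2 := real_inner_self_eq_norm_sq _
    _ = ‖X‖ ^ 2 := by rw [hnormγ]
  have hZtmax : ∀ t, ⟪X, X - t • g⟫ ≤ ⟪Zt t, X - t • g⟫ := by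
    intro t
    have h1 : ⟪Zt t, X - t • g⟫ = ⟪𝔖.γ X, 𝔖.γ (X - t • g)⟫ := by
      conv_lhs => rw [hZtdef]
      conv_lhs => rw [hc t]
      rw [hinner]
    rw [h1]
    exact 𝔖.inner_le X (X - t • g)
  have hZtbound : ∀ t : ℝ, 0 < t → ‖Zt t - X‖ ^ 2 ≤ -(2 * t) * ⟪Zt t - X, g⟫ := by
    intro t ht
    have h5 : 0 ≤ ⟪Zt t - X, X - t • g⟫ := by
      rw [inner_sub_left]
      linarith [hZtmax t]
    have h5' : ⟪Zt t - X, X - t • g⟫ = ⟪Zt t - X, X⟫ - t * ⟪Zt t - X, g⟫ := by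
      rw [inner_sub_right, real_inner_smul_right]
    have h6 : ‖Zt t - X‖ ^ 2 = -2 * ⟪Zt t - X, X⟫ := by
      have e1 := norm_sub_sq_real (Zt t) X
      rw [hZtnorm t] at e1
      rw [inner_sub_left, real_inner_self_eq_norm_sq]
      linarith
    rw [h6]
    nlinarith
  have hZtlip : ∀ t : ℝ, 0 < t → ‖Zt t - X‖ ≤ 2 * t * ‖g‖ := by
    intro t ht
    have h1 := hZtbound t ht
    have h2 : -⟪Zt t - X, g⟫ ≤ ‖Zt t - X‖ * ‖g‖ := by
      have := abs_real_inner_le_norm (Zt t - X) g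
      cases abs_le.mp this with
      | intro hl hr => linarith
    nlinarith [norm_nonneg (Zt t - X), mul_nonneg (le_of_lt ht) (norm_nonneg g)]
  have hytb : ∀ t : ℝ, 0 < t → ‖yt t‖ ≤ ‖g‖ := by
    intro t ht
    have h2 : ‖𝔖.γ (X - t • g) - 𝔖.γ X‖ ^ 2 ≤ ‖X - t • g - X‖ ^ 2 := by
      have e1 := norm_sub_sq_real (𝔖.γ (X - t • g)) (𝔖.γ X)
      have e2 := norm_sub_sq_real (X - t • g) X
      have e3 := 𝔖.inner_le (X - t • g) X
      rw [hnormγ, hnormγ] at e1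
      linarith
    have h2' : ‖𝔖.γ (X - t • g) - 𝔖.γ X‖ ≤ ‖X - t • g - X‖ :=
      by nlinarith [norm_nonneg (𝔖.γ (X - t • g) - 𝔖.γ X), norm_nonneg (X - t • g - X)]
    have h3 : ‖X - t • g - X‖ = t * ‖g‖ := by
      have : X - t • g - X = -(t • g) := by abel
      rw [this, norm_neg, norm_smul, Real.norm_eq_abs, abs_of_pos ht]
    rw [hytdef]
    simp only [norm_smul, Real.norm_eq_abs, abs_inv, abs_of_pos ht]
    rw [h3] at h2'
    calc t⁻¹ * ‖𝔖.γ (X - t • g) - 𝔖.γ X‖ ≤ t⁻¹ * (t * ‖g‖) := by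
          exact mul_le_mul_of_nonneg_left h2' (by positivity)
    _ = ‖g‖ := by field_simp
  have hΛyt : ∀ t : ℝ, 0 < t → 𝔖.Λ (c t) (yt t) = -g - t⁻¹ • (Zt t - X) := by
    intro t ht
    have h1 : 𝔖.Λ (c t) (yt t) = t⁻¹ • (X - t • g - Zt t) := by
      rw [hytdef]
      simp only [map_smul, map_sub]
      rw [← hc t, hZtdef]
    rw [h1]
    have h2 : X - t • g - Zt t = -(t • g) - (Zt t - X) := by abel
    rw [h2, smul_sub, smul_neg, smul_smul, inv_mul_cancel₀ (ne_of_gt ht), one_smul]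
  have hZtsmall : ∀ ε : ℝ, 0 < ε → ∃ t₀ : ℝ, 0 < t₀ ∧
      ∀ t : ℝ, 0 < t → t ≤ t₀ → ‖Zt t - X‖ ≤ 2 * t * ε := by
    intro ε hε
    obtain ⟨δ₂, hδ₂, hδ₂'⟩ := hgradε ε hε
    refine ⟨min δ₁ δ₂ / (2 * ‖g‖ + 1), by positivity, ?_⟩
    intro t ht ht0
    have hZd : ‖Zt t - X‖ < min δ₁ δ₂ := by
      have h1 := hZtlip t ht
      have hmpos : 0 < min δ₁ δ₂ := lt_min hδ₁ hδ₂
      have h2 : t * (2 * ‖g‖ + 1) ≤ min δ₁ δ₂ := (le_div_iff₀ (by positivity)).mp ht0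
      have : 2 * t * ‖g‖ < min δ₁ δ₂ := by nlinarith
      linarith
    have h1 : Ψ X ≤ Ψ (Zt t) := hΨle _ (hZtγ t) (lt_of_lt_of_le hZd (min_le_left _ _))
    have h2 := hδ₂' (Zt t) (lt_of_lt_of_le hZd (min_le_right _ _))
    have h3 : -⟪Zt t - X, g⟫ ≤ ε * ‖Zt t - X‖ := by
      rw [real_inner_comm]
      cases abs_le.mp h2 with
      | intro hl hr => linarith
    have h4 := hZtbound t ht
    nlinarith [norm_nonneg (Zt t - X), mul_nonneg (le_of_lt ht) (le_of_lt hε)]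
  -- compactness and subsequence extraction
  set q : ℕ → ℝ := fun n => 1 / (n + 1) with hqdef
  have hq0 : ∀ n : ℕ, 0 < q n := fun n => by positivity
  have hqlim : Filter.Tendsto q Filter.atTop (nhds 0) := tendsto_one_div_add_atTop_nhds_zero_nat
  have hKsub : 𝔖.LambdaSet ⊆ closedBall (0 : 𝒳 →L[ℝ] H) 1 := by
    rintro L ⟨a, rfl⟩
    rw [mem_closedBall, dist_zero_right]
    exact (𝔖.Λ a).norm_toContinuousLinearMap_le
  have hKcomp : IsCompact 𝔖.LambdaSet :=
    (isCompact_closedBall (0 : 𝒳 →L[ℝ] H) 1).of_isClosed_subset hcl hKsub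
  have hPcomp : IsCompact (𝔖.LambdaSet ×ˢ closedBall (0 : 𝒳) ‖g‖) :=
    hKcomp.prod (isCompact_closedBall _ _)
  have hmem : ∀ n : ℕ,
      ((𝔖.Λ (c (q n))).toContinuousLinearMap, yt (q n)) ∈
        𝔖.LambdaSet ×ˢ closedBall (0 : 𝒳) ‖g‖ := by
    intro n
    refine ⟨⟨c (q n), rfl⟩, ?_⟩
    rw [mem_closedBall, dist_zero_right]
    exact hytb (q n) (hq0 n)
  obtain ⟨⟨L, y⟩, ⟨hLK, hyB⟩, ψk, hψmono, hψtend⟩ := hPcomp.tendsto_subseq hmem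
  have htq : Filter.Tendsto (fun n => q (ψk n)) Filter.atTop (nhds 0) :=
    hqlim.comp hψmono.tendsto_atTop
  have hLtend : Filter.Tendsto (fun n => (𝔖.Λ (c (q (ψk n)))).toContinuousLinearMap)
      Filter.atTop (nhds L) := (continuous_fst.tendsto (L, y)).comp hψtend
  have hytend : Filter.Tendsto (fun n => yt (q (ψk n))) Filter.atTop (nhds y) :=
    (continuous_snd.tendsto (L, y)).comp hψtend
  -- limit 1 : L (γ X) = X
  have hZtend : Filter.Tendsto (fun n => Zt (q (ψk n))) Filter.atTop (nhds X) := by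
    rw [tendsto_iff_norm_sub_tendsto_zero]
    have hb : ∀ n, ‖Zt (q (ψk n)) - X‖ ≤ 2 * q (ψk n) * ‖g‖ := fun n =>
      hZtlip _ (hq0 _)
    have h0 : Filter.Tendsto (fun n => 2 * q (ψk n) * ‖g‖) Filter.atTop (nhds 0) := by
      have := (htq.const_mul (2 : ℝ)).mul_const ‖g‖
      simpa using this
    exact squeeze_zero (fun n => norm_nonneg _) hb h0
  have hZtend2 : Filter.Tendsto (fun n => Zt (q (ψk n))) Filter.atTop (nhds (L (𝔖.γ X))) := by
    have hcont : Continuous fun M : 𝒳 →L[ℝ] H => M (𝔖.γ X) :=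
      (ContinuousLinearMap.apply ℝ H (𝔖.γ X)).continuous
    have := (hcont.tendsto L).comp hLtend
    exact this
  have hLX : L (𝔖.γ X) = X := tendsto_nhds_unique hZtend2 hZtend
  -- limit 2 : L y = -g
  have hev : Continuous fun p : (𝒳 →L[ℝ] H) × 𝒳 => p.1 p.2 :=
    isBoundedBilinearMap_apply.continuous
  have hseq1 : Filter.Tendsto (fun n => (𝔖.Λ (c (q (ψk n)))) (yt (q (ψk n))))
      Filter.atTop (nhds (L y)) := by
    have := (hev.tendsto (L, y)).comp hψtend
    exact this
  have hseq2 : Filter.Tendsto (fun n => (𝔖.Λ (c (q (ψk n)))) (yt (q (ψk n))))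
      Filter.atTop (nhds (-g)) := by
    rw [Metric.tendsto_atTop]
    intro ε hε
    obtain ⟨t₀, ht₀pos, ht₀⟩ := hZtsmall (ε / 3) (by positivity)
    obtain ⟨N, hN⟩ := (Metric.tendsto_atTop.mp htq) t₀ ht₀pos
    refine ⟨N, fun n hn => ?_⟩
    have htn : q (ψk n) ≤ t₀ := by
      have := hN n hn
      rw [Real.dist_eq, sub_zero, abs_of_pos (hq0 _)] at this
      exact le_of_lt this
    have h1 := hΛyt (q (ψk n)) (hq0 _)
    rw [dist_eq_norm, h1]
    have h2 : -g - (q (ψk n))⁻¹ • (Zt (q (ψk n)) - X) - -g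
        = -((q (ψk n))⁻¹ • (Zt (q (ψk n)) - X)) := by abel
    rw [h2, norm_neg, norm_smul, Real.norm_eq_abs, abs_inv, abs_of_pos (hq0 _)]
    have h3 := ht₀ (q (ψk n)) (hq0 _) htn
    have hq' : 0 < q (ψk n) := hq0 _
    calc (q (ψk n))⁻¹ * ‖Zt (q (ψk n)) - X‖
        ≤ (q (ψk n))⁻¹ * (2 * q (ψk n) * (ε / 3)) := by
          exact mul_le_mul_of_nonneg_left h3 (by positivity)
    _ = 2 * (ε / 3) := by field_simp
    _ < ε := by linarith
  have hLy : L y = -g := tendsto_nhds_unique hseq1 hseq2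
  obtain ⟨a, ha⟩ := hLK
  have ha' : L = (𝔖.Λ a).toContinuousLinearMap := ha
  have haX : X = 𝔖.Λ a (𝔖.γ X) := by
    rw [ha'] at hLX; exact hLX.symm
  have hay : -g = 𝔖.Λ a y := by
    rw [ha'] at hLy; exact hLy.symm
  -- y is a Fréchet subgradient of φ at γ X
  refine ⟨y, ⟨⟨r, hr⟩, ?_⟩, a, haX, hay⟩
  intro ε hε
  have hg0 : (0:ℝ) ≤ ‖g‖ := norm_nonneg g
  set ε₁ : ℝ := ε / 4 with hε₁def
  set ε₂ : ℝ := ε / (8 * (‖g‖ + ε + 1)) with hε₂def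
  have hε₁ : 0 < ε₁ := by positivity
  have hε₂ : 0 < ε₂ := by positivity
  have hε₂le : ε₂ ≤ 1 / 8 := by
    rw [hε₂def, div_le_div_iff₀ (by positivity) (by norm_num)]
    nlinarith
  obtain ⟨δ₂, hδ₂pos, hδ₂⟩ := hgradε ε₁ hε₁
  obtain ⟨t₀, ht₀pos, ht₀⟩ := hZtsmall ε₂ hε₂
  obtain ⟨N₁, hN₁⟩ := (Metric.tendsto_atTop.mp hytend) ε₂ hε₂
  obtain ⟨N₂, hN₂⟩ := (Metric.tendsto_atTop.mp htq) t₀ ht₀pos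
  refine ⟨min δ₁ δ₂ / 2, by positivity, ?_⟩
  intro z hz
  by_cases hzX : z = 𝔖.γ X
  · subst hzX
    simp only [sub_self, inner_zero_left, norm_zero, mul_zero, sub_zero, EReal.coe_zero,
      add_zero, le_refl]
  · have hzpos : 0 < ‖z - 𝔖.γ X‖ := by
      rw [norm_sub_pos_iff]; exact hzX
    obtain ⟨N₃, hN₃⟩ := (Metric.tendsto_atTop.mp htq) ‖z - 𝔖.γ X‖ hzpos
    set n := max N₁ (max N₂ N₃) with hndef
    set t := q (ψk n) with htdef
    have ht : 0 < t := hq0 _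
    have htle : t ≤ ‖z - 𝔖.γ X‖ := by
      have h := hN₃ n (le_max_of_le_right (le_max_right _ _))
      rw [Real.dist_eq, sub_zero, abs_of_pos ht] at h
      exact h.le
    have htt₀ : t ≤ t₀ := by
      have h := hN₂ n (le_max_of_le_right (le_max_left _ _))
      rw [Real.dist_eq, sub_zero, abs_of_pos ht] at h
      exact h.le
    have hyc : ‖yt t - y‖ ≤ ε₂ := by
      have h := hN₁ n (le_max_left _ _)
      rw [dist_eq_norm] at h
      exact h.le
    have hZs : ‖Zt t - X‖ ≤ 2 * t * ε₂ := ht₀ t ht htt₀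
    have hZs' : ‖Zt t - X‖ ≤ 2 * ε₂ * ‖z - 𝔖.γ X‖ := by nlinarith
    set W := 𝔖.Λ (c t) z with hWdef
    have hZteq : Zt t = 𝔖.Λ (c t) (𝔖.γ X) := by rw [hZtdef]
    have hWsub : W - X = 𝔖.Λ (c t) (z - 𝔖.γ X) + (Zt t - X) := by
      rw [hWdef, map_sub, hZteq]; abel
    have hWd : ‖W - X‖ ≤ ‖z - 𝔖.γ X‖ + ‖Zt t - X‖ := by
      rw [hWsub]
      calc ‖𝔖.Λ (c t) (z - 𝔖.γ X) + (Zt t - X)‖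
          ≤ ‖𝔖.Λ (c t) (z - 𝔖.γ X)‖ + ‖Zt t - X‖ := norm_add_le _ _
      _ = ‖z - 𝔖.γ X‖ + ‖Zt t - X‖ := by rw [(𝔖.Λ (c t)).norm_map]
    have hWd2 : ‖W - X‖ ≤ 2 * ‖z - 𝔖.γ X‖ := by nlinarith
    have hWδ : ‖W - X‖ < min δ₁ δ₂ := by
      have h2 : ‖z - 𝔖.γ X‖ < min δ₁ δ₂ / 2 := hz
      linarith
    have hφW : φ (𝔖.γ W) = φ z := hφγΛ _ _
    have hminW := hmin W (lt_of_lt_of_le hWδ (min_le_left _ _))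
    rw [hφW, hr] at hminW
    have hgW := hδ₂ W (lt_of_lt_of_le hWδ (min_le_right _ _))
    -- inner product estimates
    have hR0 : t⁻¹ * ‖Zt t - X‖ ≤ 2 * ε₂ := by
      have h := mul_le_mul_of_nonneg_left hZs (le_of_lt (inv_pos.mpr ht))
      calc t⁻¹ * ‖Zt t - X‖ ≤ t⁻¹ * (2 * t * ε₂) := h
      _ = 2 * ε₂ := by field_simp
    have hR1 : ⟪𝔖.Λ (c t) (z - 𝔖.γ X), -g⟫ ≥ ⟪z - 𝔖.γ X, yt t⟫
        - ‖z - 𝔖.γ X‖ * (2 * ε₂) := by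
      have e1 : (-g : H) = 𝔖.Λ (c t) (yt t) + t⁻¹ • (Zt t - X) := by
        rw [hΛyt t ht]; abel
      rw [e1, inner_add_right, hinner]
      have e2 : |⟪𝔖.Λ (c t) (z - 𝔖.γ X), t⁻¹ • (Zt t - X)⟫|
          ≤ ‖z - 𝔖.γ X‖ * (2 * ε₂) := by
        have e3 := abs_real_inner_le_norm (𝔖.Λ (c t) (z - 𝔖.γ X)) (t⁻¹ • (Zt t - X))
        rw [(𝔖.Λ (c t)).norm_map, norm_smul, Real.norm_eq_abs, abs_inv, abs_of_pos ht] at e3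
        calc |⟪𝔖.Λ (c t) (z - 𝔖.γ X), t⁻¹ • (Zt t - X)⟫|
            ≤ ‖z - 𝔖.γ X‖ * (t⁻¹ * ‖Zt t - X‖) := e3
        _ ≤ ‖z - 𝔖.γ X‖ * (2 * ε₂) := by
            exact mul_le_mul_of_nonneg_left hR0 (norm_nonneg _)
      have := (abs_le.mp e2).1
      linarith
    have hR2 : ⟪z - 𝔖.γ X, yt t⟫ ≥ ⟪z - 𝔖.γ X, y⟫ - ‖z - 𝔖.γ X‖ * ε₂ := by
      have e1 : ⟪z - 𝔖.γ X, yt t⟫ = ⟪z - 𝔖.γ X, y⟫ + ⟪z - 𝔖.γ X, yt t - y⟫ := by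
        rw [inner_sub_right]; ring
      have e2 := abs_real_inner_le_norm (z - 𝔖.γ X) (yt t - y)
      have e3 : |⟪z - 𝔖.γ X, yt t - y⟫| ≤ ‖z - 𝔖.γ X‖ * ε₂ := by
        calc |⟪z - 𝔖.γ X, yt t - y⟫| ≤ ‖z - 𝔖.γ X‖ * ‖yt t - y‖ := e2
        _ ≤ ‖z - 𝔖.γ X‖ * ε₂ := mul_le_mul_of_nonneg_left hyc (norm_nonneg _)
      have := (abs_le.mp e3).1
      linarith
    have hR3 : ⟪Zt t - X, -g⟫ ≥ -(2 * ε₂ * ‖z - 𝔖.γ X‖ * ‖g‖) := by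
      have e1 := abs_real_inner_le_norm (Zt t - X) (-g)
      rw [norm_neg] at e1
      have e2 : ‖Zt t - X‖ * ‖g‖ ≤ 2 * ε₂ * ‖z - 𝔖.γ X‖ * ‖g‖ :=
        mul_le_mul_of_nonneg_right hZs' hg0
      have := (abs_le.mp e1).1
      linarith
    have hR4 : ⟪g, W - X⟫ = -(⟪𝔖.Λ (c t) (z - 𝔖.γ X), -g⟫ + ⟪Zt t - X, -g⟫) := by
      rw [hWsub, inner_add_right, inner_neg_right, inner_neg_right,
        real_inner_comm g (𝔖.Λ (c t) (z - 𝔖.γ X)), real_inner_comm g (Zt t - X)]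
      ring
    have hkey : Ψ X - Ψ W ≥ ⟪z - 𝔖.γ X, y⟫ - ε * ‖z - 𝔖.γ X‖ := by
      have e1 : Ψ W - Ψ X - ⟪g, W - X⟫ ≤ ε₁ * ‖W - X‖ := (abs_le.mp hgW).2
      have e2 : ε₁ * ‖W - X‖ ≤ ε₁ * (2 * ‖z - 𝔖.γ X‖) :=
        mul_le_mul_of_nonneg_left hWd2 (le_of_lt hε₁)
      have e4 : ε₂ * (3 + 2 * ‖g‖) ≤ ε / 2 := by
        rw [hε₂def]
        rw [div_mul_eq_mul_div, div_le_div_iff₀ (by positivity) (by norm_num)]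
        nlinarith
      nlinarith [hR1, hR2, hR3, hR4, hzpos]
    -- conclude in EReal
    by_cases hzt : φ z = ⊤
    · rw [hzt]; exact le_top
    · obtain ⟨s, hs⟩ : ∃ s : ℝ, φ z = (s : EReal) :=
        ⟨(φ z).toReal, (EReal.coe_toReal hzt (hφbot _)).symm⟩
      rw [hs, ← EReal.coe_add, ← EReal.coe_add, EReal.coe_le_coe_iff] at hminW
      rw [hr, hs, ← EReal.coe_add, EReal.coe_le_coe_iff]
      linarith
end
end
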